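/- For all n ≥ 0 and k ∈ ℤ, the modified Stirling cycle number satisfies [n choose k]* = Σ_{j=1}^{k} (-1)^{j-1} ω_j [n choose k-j], where ω_j = [0 choose j]* · (-1)^{j-1} are determined by the array a_{0,m} = 1/(m+1), a_{n+1,m} = (a_{n,m} - a_{n,m+1})/(m+1), ω_n = a_{n,0}. -/

import Mathlib

/-- The array a_{n,m}: a_{0,m} = 1/(m+1), a_{n+1,m} = (a_{n,m} - a_{n,m+1})/(m+1). -/
def aArr : ℕ → ℕ → ℚ
  | 0, m => 1 / ((m : ℚ) + 1)
  | n + 1, m => (aArr n m - aArr n (m + 1)) / ((m : ℚ) + 1)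

/-- ω_n = a_{n,0}. -/
def omegaSeq (n : ℕ) : ℚ := aArr n 0

/-- Stirling cycle numbers. -/
def stirCycle : ℕ → ℤ → ℚ
  | 0, k => if k = 0 then 1 else 0
  | n+1, k => stirCycle n (k - 1) + (n : ℚ) * stirCycle n k

lemma stir_neg : ∀ (n : ℕ) (k : ℤ), k < 0 → stirCycle n k = 0 := by
  intro n
  induction n with
  | zero => intro k hk; simp [stirCycle]; omega
  | succ n ih =>
      intro k hk
      rw [stirCycle, ih _ (by omega), ih _ hk]
      ring

theorem stmt17 (Sstar : ℕ → ℤ → ℚ)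
    (hSrec : ∀ (n : ℕ) (k : ℤ), Sstar (n + 1) k = Sstar n (k - 1) + (n : ℚ) * Sstar n k)
    (hS0 : ∀ k : ℤ, k ≤ 0 → Sstar 0 k = 0)
    (hSdiag : ∀ n : ℕ, 1 ≤ n → Sstar n (n : ℤ) = ((n : ℚ) - 1) / n)
    (n : ℕ) (k : ℤ) :
    Sstar n k
      = ∑ j ∈ Finset.Icc 1 k.toNat,
          (-1 : ℚ) ^ (j - 1) * omegaSeq j * stirCycle n (k - j) := by
  -- Step 1: superdiagonal formula
  have L2 : ∀ (d m : ℕ), Sstar (m+1) ((m:ℤ) + d + 2) = (-1)^d * aArr (d+1) m := by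
    intro d
    induction d with
    | zero =>
        intro m
        have hm : ((m:ℚ)+1) ≠ 0 := by positivity
        have h := hSrec (m+1) ((m:ℤ)+2)
        have h1 := hSdiag (m+1) (by omega)
        have h2 := hSdiag (m+2) (by omega)
        push_cast at h h1 h2
        have hh1 : Sstar (m+1) ((m:ℤ)+1) = ((m:ℚ)+1-1)/((m:ℚ)+1) := h1
        have hh2 : Sstar (m+2) ((m:ℤ)+2) = ((m:ℚ)+2-1)/((m:ℚ)+2) := h2
        have key : ((m:ℚ)+1) * Sstar (m+1) ((m:ℤ)+2)
            = ((m:ℚ)+1) * ((-1)^0 * aArr 1 m) := by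
          have hsub : ((m:ℤ)+2) - 1 = (m:ℤ)+1 := by ring
          rw [hsub] at h
          have hm2 : ((m:ℚ)+2) ≠ 0 := by positivity
          have : ((m:ℚ)+1) * Sstar (m+1) ((m:ℤ)+2)
              = Sstar (m+2) ((m:ℤ)+2) - Sstar (m+1) ((m:ℤ)+1) := by linarith [h]
          rw [this, hh1, hh2]
          have ha : aArr 1 m = (1/((m:ℚ)+1) - 1/((m:ℚ)+2)) / ((m:ℚ)+1) := by
            rw [show aArr 1 m = (aArr 0 m - aArr 0 (m+1)) / ((m:ℚ)+1) from rfl,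
              show aArr 0 m = 1/((m:ℚ)+1) from rfl,
              show aArr 0 (m+1) = 1/(((m+1:ℕ):ℚ)+1) from rfl]
            push_cast
            ring_nf
          rw [ha]
          have hm2 : ((m:ℚ)+2) ≠ 0 := by positivity
          field_simp
          ring
        exact mul_left_cancel₀ hm key
    | succ d ih =>
        intro m
        have hm : ((m:ℚ)+1) ≠ 0 := by positivity
        have h := hSrec (m+1) ((m:ℤ) + d + 3)
        have h1 := ih m
        have h2 := ih (m+1)
        push_cast at h h1 h2
        have hh2 : Sstar (m+2) ((m:ℤ)+d+3) = (-1)^d * aArr (d+1) (m+1) := by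
          rw [show (m:ℤ)+d+3 = ((m:ℤ)+1)+d+2 by ring] at *
          exact h2
        have key : ((m:ℚ)+1) * Sstar (m+1) ((m:ℤ)+d+3)
            = ((m:ℚ)+1) * ((-1)^(d+1) * aArr (d+2) m) := by
          have hsub : ((m:ℤ)+d+3) - 1 = (m:ℤ)+d+2 := by ring
          rw [hsub] at h
          have : ((m:ℚ)+1) * Sstar (m+1) ((m:ℤ)+d+3)
              = Sstar (m+2) ((m:ℤ)+d+3) - Sstar (m+1) ((m:ℤ)+d+2) := by linarith [h]
          rw [this, hh2, h1,
            show aArr (d+2) m = (aArr (d+1) m - aArr (d+1) (m+1)) / ((m:ℚ)+1) from rfl]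
          field_simp
          ring
        exact mul_left_cancel₀ hm key
  -- Step 2: row zero values
  have L3 : ∀ j : ℕ, Sstar 0 ((j:ℤ)+1) = (-1)^j * omegaSeq (j+1) := by
    intro j
    have h := hSrec 0 ((j:ℤ)+2)
    have h2 := L2 j 0
    push_cast at h h2
    rw [show ((j:ℤ)+2) - 1 = (j:ℤ)+1 by ring] at h
    rw [show (0:ℤ)+(j:ℤ)+2 = (j:ℤ)+2 by ring] at h2
    have : Sstar 0 ((j:ℤ)+1) = Sstar 1 ((j:ℤ)+2) := by
      rw [h]; push_cast; ring
    rw [this, h2]; rfl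
  -- Step 3: main induction on n
  clear hSdiag
  induction n generalizing k with
  | zero =>
      rcases le_or_gt k 0 with hk | hk
      · rw [hS0 k hk, show k.toNat = 0 by omega]
        simp
      · have hK : 1 ≤ k.toNat := by omega
        have hkk : (k.toNat : ℤ) = k := by omega
        rw [Finset.sum_eq_single_of_mem k.toNat (Finset.mem_Icc.mpr ⟨hK, le_refl _⟩)]
        · rw [show k - (k.toNat : ℤ) = 0 by omega]
          have := L3 (k.toNat - 1)
          rw [show ((k.toNat - 1 : ℕ):ℤ) + 1 = k by omega,
            show k.toNat - 1 + 1 = k.toNat by omega] at this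
          rw [this]
          simp [stirCycle]
        · intro j hj hne
          have hj' := Finset.mem_Icc.mp hj
          rw [show stirCycle 0 (k - j) = 0 from by
            simp [stirCycle]; omega]
          ring
  | succ n ih =>
      have step : ∀ j : ℕ, stirCycle (n+1) (k - j)
          = stirCycle n ((k-1) - j) + (n:ℚ) * stirCycle n (k - j) := by
        intro j
        rw [stirCycle]
        ring_nf
      rw [hSrec n k, ih (k-1), ih k]
      have split : ∑ j ∈ Finset.Icc 1 k.toNat,
            (-1:ℚ)^(j-1) * omegaSeq j * stirCycle (n+1) (k - j)
          = (∑ j ∈ Finset.Icc 1 k.toNat,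
              (-1:ℚ)^(j-1) * omegaSeq j * stirCycle n ((k-1) - j))
            + (n:ℚ) * ∑ j ∈ Finset.Icc 1 k.toNat,
              (-1:ℚ)^(j-1) * omegaSeq j * stirCycle n (k - j) := by
        rw [Finset.mul_sum, ← Finset.sum_add_distrib]
        refine Finset.sum_congr rfl (fun j _ => ?_)
        rw [step j]
        ring
      rw [split]
      congr 1
      rcases le_or_gt k 0 with hk | hk
      · rw [show (k-1).toNat = 0 by omega, show k.toNat = 0 by omega]
      · rw [show k.toNat = (k-1).toNat + 1 by omega,
          Finset.sum_Icc_succ_top (by omega : 1 ≤ (k-1).toNat + 1)]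
        rw [show (k-1) - ((k-1).toNat + 1 : ℕ) = -1 by push_cast; omega,
          stir_neg n (-1) (by omega)]
        ring
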